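/- Let g be a weak cohyperation of an initial function f, let ξ and α be ordinals, and let η* < ξ be the least ordinal such that g η* α = min_{η<ξ} g η α (the least index below ξ minimizing g η α). Then: (1) g η α > g η* α whenever η < η*; and (2) g η α = g η* α whenever η* < η < ξ. -/

import Mathlib

open Ordinal

/-- An ordinal function is *initial* if it maps every initial segment onto an initial segment. -/
def Initial (g : Ordinal → Ordinal) : Prop :=
  ∀ β : Ordinal, ∃ γ : Ordinal, g '' {α | α < β} = {α | α < γ}

universe u v

/-- Normal ordinal function (the older Mathlib's `Ordinal.IsNormal`, restated). -/
def Ordinal.IsNormal (f : Ordinal.{u} → Ordinal.{v}) : Prop :=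
  StrictMono f ∧ ∀ o, Order.IsSuccLimit o → ∀ a, f o ≤ a ↔ ∀ b < o, f b ≤ a

/-- A *weak hyperation* of a normal function `f`. -/
def WeakHyperation (f : Ordinal → Ordinal) (g : Ordinal → Ordinal → Ordinal) : Prop :=
  (∀ ξ : Ordinal, Ordinal.IsNormal (g ξ)) ∧ g 0 = id ∧ g 1 = f ∧
    ∀ ξ ζ : Ordinal, g (ξ + ζ) = g ξ ∘ g ζ

/-- `F` is *the hyperation* of `f`: the pointwise minimal weak hyperation. -/
def IsHyperation (f : Ordinal → Ordinal) (F : Ordinal → Ordinal → Ordinal) : Prop :=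
  WeakHyperation f F ∧
    ∀ h : Ordinal → Ordinal → Ordinal, WeakHyperation f h → ∀ ξ ζ : Ordinal, F ξ ζ ≤ h ξ ζ

/-- A *weak cohyperation* of an initial function `f`. -/
def WeakCohyperation (f : Ordinal → Ordinal) (g : Ordinal → Ordinal → Ordinal) : Prop :=
  (∀ ξ : Ordinal, Initial (g ξ)) ∧ g 0 = id ∧ g 1 = f ∧
    ∀ ξ ζ : Ordinal, g (ξ + ζ) = g ζ ∘ g ξ

/-- `G` is *the cohyperation* of `f`: the pointwise maximal weak cohyperation. -/
def IsCohyperation (f : Ordinal → Ordinal) (G : Ordinal → Ordinal → Ordinal) : Prop :=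
  WeakCohyperation f G ∧
    ∀ h : Ordinal → Ordinal → Ordinal, WeakCohyperation f h → ∀ ξ α : Ordinal, h ξ α ≤ G ξ α

/-- `g` is a *left adjoint* of `f`. -/
def LeftAdjoint (f g : Ordinal → Ordinal) : Prop :=
  ∀ α β : Ordinal, (α = f β → g α = β) ∧ (α < f β → g α < β)

lemma initial_le {g : Ordinal → Ordinal} (h : Initial g) : ∀ α, g α ≤ α := by
  intro α
  induction α using Ordinal.induction with
  | h α IH =>
    by_contra hc
    push_neg at hc
    obtain ⟨γ, hγ⟩ := h (α + 1)
    have hmem : g α ∈ {x | x < γ} := by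
      rw [← hγ]; exact ⟨α, Order.lt_succ α, rfl⟩
    have hα : α ∈ {x | x < γ} := lt_trans hc hmem
    rw [← hγ] at hα
    obtain ⟨x, hx, hgx⟩ := hα
    have hx' : x ≤ α := Order.lt_succ_iff.mp hx
    rcases hx'.lt_or_eq with h1 | h1
    · exact absurd hgx (lt_of_le_of_lt (IH x h1) h1).ne
    · subst h1; exact absurd (hgx ▸ hc) (lt_irrefl _)

theorem weakCohyperation_min_stable (f : Ordinal → Ordinal) (hf : Initial f)
    (g : Ordinal → Ordinal → Ordinal) (hg : WeakCohyperation f g)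
    (ξ α ηstar : Ordinal) (hlt : ηstar < ξ)
    (hmin : ∀ η : Ordinal, η < ξ → g ηstar α ≤ g η α)
    (hleast : ∀ η : Ordinal, η < ξ → g η α ≤ g ηstar α → ηstar ≤ η) :
    (∀ η : Ordinal, η < ηstar → g ηstar α < g η α) ∧
    (∀ η : Ordinal, ηstar < η → η < ξ → g η α = g ηstar α) := by
  obtain ⟨hinit, h0, h1, hadd⟩ := hg
  constructor
  · intro η hη
    by_contra hc
    push_neg at hc
    exact absurd (hleast η (hη.trans hlt) hc) (not_le.mpr hη)
  · intro η hη hηξ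
    have hsub : ηstar + (η - ηstar) = η := Ordinal.add_sub_cancel_of_le hη.le
    have := congrFun (hadd ηstar (η - ηstar)) α
    rw [hsub] at this
    refine le_antisymm ?_ (hmin η hηξ)
    rw [this]
    exact initial_le (hinit _) _
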